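/- Let q be real with 0 < q < 1/2, p = 1 − q, and γ ∈ (0,1]. Then ( ∑_{n=1}^∞ (pq)^n·C_{n−1}·( n + q − (p(1−γ)/γ)·(1 − (1−γ)^n) ) ) / ( (p − q + pq)/(p − q) ) = q(p + pq − q²)/(p + pq − q) − (pq(p − q)(1 − γ)/γ)·( 1 − p(1−γ)·Ĉ((1−γ)pq) )/(p + pq − q). Here the numerator is the expected number E[Z] of attacker blocks in the official chain per Lead Stubborn Mining cycle (the expected attacker block count on the event {L = n+1} being n + q − (p(1−γ)/γ)(1 − (1−γ)^n)) and (p − q + pq)/(p − q) is E[L], so this is the long-term apparent hashrate of the Lead Stubborn miner. -/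

import Mathlib

open scoped BigOperators

/-- The `n`-th Catalan number `C_n = (2n)! / (n! * (n+1)!)`, as a real number. -/
noncomputable def catalanC (n : ℕ) : ℝ :=
  (Nat.factorial (2 * n) : ℝ) / ((Nat.factorial n : ℝ) * (Nat.factorial (n + 1) : ℝ))

/-- The value of the Catalan generating series: `Ĉ(x) = (1 - √(1 - 4x)) / (2x)` for
`x ≠ 0` and `Ĉ(0) = 1`. -/
noncomputable def catalanGF (x : ℝ) : ℝ :=
  if x = 0 then 1 else (1 - Real.sqrt (1 - 4 * x)) / (2 * x)

open Finset

lemma catalanC_eq (n : ℕ) : catalanC n = (catalan n : ℝ) := by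
  have h1 : (2 * n).choose n * (Nat.factorial n * Nat.factorial n) = Nat.factorial (2 * n) := by
    have := Nat.choose_mul_factorial_mul_factorial (Nat.le_mul_of_pos_left n (by norm_num) : n ≤ 2 * n)
    have h2 : 2 * n - n = n := by omega
    rw [h2] at this
    linarith [this]
  have h3 : ((n : ℕ) + 1) * catalan n = (2 * n).choose n := by
    rw [← Nat.centralBinom_eq_two_mul_choose]
    exact succ_mul_catalan_eq_centralBinom n
  have hfn : (Nat.factorial n : ℝ) ≠ 0 := Nat.cast_ne_zero.2 (Nat.factorial_ne_zero n)
  have hfn1 : (Nat.factorial (n+1) : ℝ) ≠ 0 := Nat.cast_ne_zero.2 (Nat.factorial_ne_zero _)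
  have hcast : (Nat.factorial (2*n) : ℝ) = ((2*n).choose n : ℝ) * ((Nat.factorial n : ℝ) * (Nat.factorial n : ℝ)) := by
    exact_mod_cast (h1.symm)
  have hc2 : ((2*n).choose n : ℝ) = ((n:ℝ)+1) * (catalan n : ℝ) := by exact_mod_cast h3.symm
  have hfs : (Nat.factorial (n+1) : ℝ) = ((n:ℝ)+1) * (Nat.factorial n : ℝ) := by
    rw [Nat.factorial_succ]; push_cast; ring
  rw [catalanC, hcast, hc2, hfs]
  field_simp

lemma catalan_le_four_pow (n : ℕ) : (catalan n : ℝ) ≤ 4 ^ n := by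
  have h1 : catalan n ≤ n.centralBinom := by
    have := succ_mul_catalan_eq_centralBinom n
    nlinarith [Nat.le_mul_of_pos_left (catalan n) (Nat.succ_pos n)]
  have h2 : n.centralBinom ≤ 4 ^ n := by
    rw [Nat.centralBinom_eq_two_mul_choose]
    calc (2*n).choose n ≤ (2*n+1).choose n := Nat.choose_le_choose n (by omega)
      _ ≤ 4 ^ n := Nat.choose_middle_le_pow n
  exact_mod_cast h1.trans h2



lemma catalan_le_four_pow' (n : ℕ) : (catalan n : ℝ) ≤ 4 ^ n := by
  have h1 : catalan n ≤ n.centralBinom := by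
    have := succ_mul_catalan_eq_centralBinom n
    nlinarith [Nat.le_mul_of_pos_left (catalan n) (Nat.succ_pos n)]
  have h2 : n.centralBinom ≤ 4 ^ n := by
    rw [Nat.centralBinom_eq_two_mul_choose]
    calc (2*n).choose n ≤ (2*n+1).choose n := Nat.choose_le_choose n (by omega)
      _ ≤ 4 ^ n := Nat.choose_middle_le_pow n
  exact_mod_cast h1.trans h2

variable {x : ℝ}

lemma summable_S (h0 : 0 ≤ x) (h4 : x < 1/4) :
    Summable (fun n : ℕ => (catalan n : ℝ) * x ^ (n+1)) := by
  have hg : Summable (fun n : ℕ => x * (4*x) ^ n) :=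
    (summable_geometric_of_lt_one (by positivity) (by linarith)).mul_left x
  refine Summable.of_nonneg_of_le (fun n => by positivity) (fun n => ?_) hg
  have := catalan_le_four_pow' n
  have hb : (catalan n : ℝ) * x ^ (n+1) ≤ 4 ^ n * x ^ (n+1) := by
    apply mul_le_mul_of_nonneg_right this (by positivity)
  calc (catalan n : ℝ) * x ^ (n+1) ≤ 4 ^ n * x ^ (n+1) := hb
    _ = x * (4*x) ^ n := by rw [mul_pow]; ring

lemma summable_T (h0 : 0 ≤ x) (h4 : x < 1/4) :
    Summable (fun n : ℕ => ((n:ℝ)+1) * (catalan n : ℝ) * x ^ (n+1)) := by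
  have hr : ‖(4*x : ℝ)‖ < 1 := by
    rw [Real.norm_eq_abs, abs_of_nonneg (by positivity)]; linarith
  have h1 : Summable (fun n : ℕ => (n:ℝ) ^ 1 * (4*x) ^ n) :=
    summable_pow_mul_geometric_of_norm_lt_one 1 hr
  have h2 : Summable (fun n : ℕ => (4*x) ^ n) :=
    summable_geometric_of_lt_one (by positivity) (by linarith)
  have hg : Summable (fun n : ℕ => x * ((n:ℝ) ^ 1 * (4*x) ^ n + (4*x) ^ n)) :=
    (h1.add h2).mul_left x
  refine Summable.of_nonneg_of_le (fun n => by positivity) (fun n => ?_) hg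
  have hc := catalan_le_four_pow' n
  have hcn : (0:ℝ) ≤ (n:ℝ) + 1 := by positivity
  have hb : ((n:ℝ)+1) * (catalan n : ℝ) * x ^ (n+1) ≤ ((n:ℝ)+1) * 4 ^ n * x ^ (n+1) := by
    have : ((n:ℝ)+1) * (catalan n : ℝ) ≤ ((n:ℝ)+1) * 4 ^ n :=
      mul_le_mul_of_nonneg_left hc hcn
    exact mul_le_mul_of_nonneg_right this (by positivity)
  calc ((n:ℝ)+1) * (catalan n : ℝ) * x ^ (n+1) ≤ ((n:ℝ)+1) * 4 ^ n * x ^ (n+1) := hb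
    _ = x * ((n:ℝ) ^ 1 * (4*x) ^ n + (4*x) ^ n) := by rw [mul_pow]; ring

lemma summable_S_norm (h0 : 0 ≤ x) (h4 : x < 1/4) :
    Summable (fun n : ℕ => ‖(catalan n : ℝ) * x ^ (n+1)‖) := by
  have := summable_S h0 h4
  refine this.congr fun n => ?_
  rw [Real.norm_of_nonneg (by positivity)]

lemma summable_T_norm (h0 : 0 ≤ x) (h4 : x < 1/4) :
    Summable (fun n : ℕ => ‖((n:ℝ)+1) * (catalan n : ℝ) * x ^ (n+1)‖) := by
  have := summable_T h0 h4
  refine this.congr fun n => ?_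
  rw [Real.norm_of_nonneg (by positivity)]

lemma S_quadratic (h0 : 0 ≤ x) (h4 : x < 1/4) :
    (∑' n : ℕ, (catalan n : ℝ) * x ^ (n+1)) * (∑' n : ℕ, (catalan n : ℝ) * x ^ (n+1))
      = (∑' n : ℕ, (catalan n : ℝ) * x ^ (n+1)) - x := by
  rw [tsum_mul_tsum_eq_tsum_sum_antidiagonal_of_summable_norm
    (summable_S_norm h0 h4) (summable_S_norm h0 h4)]
  have key : ∀ n : ℕ, (∑ ij ∈ antidiagonal n,
      ((catalan ij.1 : ℝ) * x ^ (ij.1+1)) * ((catalan ij.2 : ℝ) * x ^ (ij.2+1)))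
      = (catalan (n+1) : ℝ) * x ^ (n+2) := by
    intro n
    have h1 : ∀ ij ∈ antidiagonal n,
        ((catalan ij.1 : ℝ) * x ^ (ij.1+1)) * ((catalan ij.2 : ℝ) * x ^ (ij.2+1))
          = ((catalan ij.1 : ℝ) * (catalan ij.2 : ℝ)) * x ^ (n+2) := by
      intro ij hij
      rw [Finset.HasAntidiagonal.mem_antidiagonal] at hij
      rw [← hij]; ring
    rw [Finset.sum_congr rfl h1, ← Finset.sum_mul]
    congr 1
    rw [catalan_succ']
    push_cast
    rfl
  rw [tsum_congr key]
  have hshift := Summable.tsum_eq_zero_add (summable_S h0 h4)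
  norm_num at hshift
  have : ∑' n : ℕ, (catalan (n+1) : ℝ) * x ^ (n+2) =
      ∑' n : ℕ, (catalan (n+1) : ℝ) * x ^ ((n+1)+1) := by
    apply tsum_congr; intro n; norm_num
  rw [this]
  linarith [hshift]

lemma ST_identity (h0 : 0 ≤ x) (h4 : x < 1/4) :
    2 * ((∑' n : ℕ, (catalan n : ℝ) * x ^ (n+1)) *
        (∑' n : ℕ, ((n:ℝ)+1) * (catalan n : ℝ) * x ^ (n+1)))
      = (∑' n : ℕ, ((n:ℝ)+1) * (catalan n : ℝ) * x ^ (n+1)) - x := by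
  rw [tsum_mul_tsum_eq_tsum_sum_antidiagonal_of_summable_norm
    (summable_S_norm h0 h4) (summable_T_norm h0 h4)]
  have inner : ∀ n : ℕ, (∑ ij ∈ antidiagonal n,
      (catalan ij.1 : ℝ) * (((ij.2:ℝ)+1) * (catalan ij.2 : ℝ)))
      = (((n:ℝ)+2)/2) * (catalan (n+1) : ℝ) := by
    intro n
    set A := ∑ ij ∈ antidiagonal n, (catalan ij.1 : ℝ) * (((ij.2:ℝ)+1) * (catalan ij.2 : ℝ)) with hA
    have hswap : A = ∑ ij ∈ antidiagonal n, (((ij.1:ℝ)+1) * (catalan ij.1 : ℝ)) * (catalan ij.2 : ℝ) := by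
      rw [hA, ← Finset.Nat.sum_antidiagonal_swap
        (f := fun p => (((p.1:ℝ)+1) * (catalan p.1 : ℝ)) * (catalan p.2 : ℝ))]
      apply Finset.sum_congr rfl
      intro ij _
      simp [Prod.swap]
      ring
    have h2A : 2 * A = ((n:ℝ)+2) * (catalan (n+1) : ℝ) := by
      have : 2 * A = ∑ ij ∈ antidiagonal n,
          ((catalan ij.1 : ℝ) * (((ij.2:ℝ)+1) * (catalan ij.2 : ℝ))
            + (((ij.1:ℝ)+1) * (catalan ij.1 : ℝ)) * (catalan ij.2 : ℝ)) := by
        rw [Finset.sum_add_distrib, ← hA, ← hswap]; ring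
      rw [this]
      have hcong : ∀ ij ∈ antidiagonal n,
          ((catalan ij.1 : ℝ) * (((ij.2:ℝ)+1) * (catalan ij.2 : ℝ))
            + (((ij.1:ℝ)+1) * (catalan ij.1 : ℝ)) * (catalan ij.2 : ℝ))
          = ((n:ℝ)+2) * ((catalan ij.1 : ℝ) * (catalan ij.2 : ℝ)) := by
        intro ij hij
        rw [Finset.HasAntidiagonal.mem_antidiagonal] at hij
        have h : (ij.1:ℝ) + ij.2 = n := by exact_mod_cast congrArg (Nat.cast : ℕ → ℝ) hij
        rw [← h]; ring
      rw [Finset.sum_congr rfl hcong, ← Finset.mul_sum]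
      congr 1
      rw [catalan_succ']
      push_cast
      rfl
    linarith
  have key : ∀ n : ℕ, (∑ ij ∈ antidiagonal n,
      ((catalan ij.1 : ℝ) * x ^ (ij.1+1)) * ((((ij.2:ℝ)+1) * (catalan ij.2 : ℝ)) * x ^ (ij.2+1)))
      = (((n:ℝ)+2)/2) * (catalan (n+1) : ℝ) * x ^ (n+2) := by
    intro n
    have h1 : ∀ ij ∈ antidiagonal n,
        ((catalan ij.1 : ℝ) * x ^ (ij.1+1)) * ((((ij.2:ℝ)+1) * (catalan ij.2 : ℝ)) * x ^ (ij.2+1))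
          = ((catalan ij.1 : ℝ) * (((ij.2:ℝ)+1) * (catalan ij.2 : ℝ))) * x ^ (n+2) := by
      intro ij hij
      rw [Finset.HasAntidiagonal.mem_antidiagonal] at hij
      rw [← hij]; ring
    rw [Finset.sum_congr rfl h1, ← Finset.sum_mul, inner n]
  have key' : ∀ n : ℕ, (∑ ij ∈ antidiagonal n,
      ((catalan ij.1 : ℝ) * x ^ (ij.1+1)) * ((((ij.2:ℝ)+1) * (catalan ij.2 : ℝ)) * x ^ (ij.2+1)))
      = (((n:ℝ)+2)/2) * ((catalan (n+1) : ℝ) * x ^ (n+2)) := by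
    intro n; rw [key n]; ring
  have key'' : ∀ n : ℕ, (∑ ij ∈ antidiagonal n,
      ((catalan ij.1 : ℝ) * x ^ (ij.1+1)) * ((((ij.2:ℝ)+1) * (catalan ij.2 : ℝ)) * x ^ (ij.2+1)))
      = (1/2) * (((((n:ℕ)+1:ℕ):ℝ)+1) * (catalan (n+1) : ℝ) * x ^ ((n+1)+1)) := by
    intro n; rw [key n]; push_cast; ring
  rw [tsum_congr key'', tsum_mul_left]
  have hshift := Summable.tsum_eq_zero_add (summable_T h0 h4)
  norm_num at hshift ⊢
  linarith [hshift]

lemma S_mono_strict {y : ℝ} (h0 : 0 ≤ x) (hxy : x ≤ y) (h4 : y < 1/4) :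
    (∑' n : ℕ, (catalan n : ℝ) * x ^ (n+1)) + (y - x)
      ≤ ∑' n : ℕ, (catalan n : ℝ) * y ^ (n+1) := by
  have hx := summable_S h0 (lt_of_le_of_lt hxy h4)
  have hy := summable_S (h0.trans hxy) h4
  have hsub := hy.sub hx
  have hterm : ∀ n : ℕ, 0 ≤ (catalan n : ℝ) * y ^ (n+1) - (catalan n : ℝ) * x ^ (n+1) := by
    intro n
    have h1 : x ^ (n+1) ≤ y ^ (n+1) := pow_le_pow_left₀ h0 hxy _
    have h2 : (0:ℝ) ≤ (catalan n : ℝ) := Nat.cast_nonneg _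
    nlinarith
  have h0th : y - x ≤ ∑' n : ℕ, ((catalan n : ℝ) * y ^ (n+1) - (catalan n : ℝ) * x ^ (n+1)) := by
    have := Summable.le_tsum hsub 0 (fun i _ => hterm i)
    simpa using this
  have hts := Summable.tsum_sub hy hx
  linarith [hts, h0th]

lemma S_lt_half (h0 : 0 ≤ x) (h4 : x < 1/4) :
    (∑' n : ℕ, (catalan n : ℝ) * x ^ (n+1)) < 1/2 := by
  by_contra hcon
  push_neg at hcon
  set a := ∑' n : ℕ, (catalan n : ℝ) * x ^ (n+1) with ha
  have hqa : a * a = a - x := S_quadratic h0 h4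
  have hane : a ≠ 1/2 := by
    intro h; rw [h] at hqa; nlinarith
  have hagt : 1/2 < a := lt_of_le_of_ne hcon (Ne.symm hane)
  set y := (x + 1/4)/2 with hy
  have hxy : x < y := by rw [hy]; linarith
  have hy4 : y < 1/4 := by rw [hy]; linarith
  set b := ∑' n : ℕ, (catalan n : ℝ) * y ^ (n+1) with hb
  have hqb : b * b = b - y := S_quadratic (by linarith) hy4
  have hmono : a + (y - x) ≤ b := S_mono_strict h0 (le_of_lt hxy) hy4
  have hkey : (b - a) * (b + a - 1) > 0 :=
    mul_pos (by linarith) (by linarith)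
  nlinarith [hkey, hqa, hqb]

lemma sqrt_eq_S (h0 : 0 ≤ x) (h4 : x < 1/4) :
    Real.sqrt (1 - 4*x) = 1 - 2 * ∑' n : ℕ, (catalan n : ℝ) * x ^ (n+1) := by
  have hq := S_quadratic h0 h4
  have hh := S_lt_half h0 h4
  have h : 1 - 4*x = (1 - 2 * ∑' n : ℕ, (catalan n : ℝ) * x ^ (n+1))^2 := by nlinarith [hq]
  rw [h, Real.sqrt_sq (by linarith)]

lemma S_closed (h0 : 0 ≤ x) (h4 : x < 1/4) :
    ∑' n : ℕ, (catalan n : ℝ) * x ^ (n+1) = (1 - Real.sqrt (1 - 4*x))/2 := by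
  rw [sqrt_eq_S h0 h4]; ring

lemma T_closed (h0 : 0 ≤ x) (h4 : x < 1/4) :
    ∑' n : ℕ, ((n:ℝ)+1) * (catalan n : ℝ) * x ^ (n+1) = x / Real.sqrt (1 - 4*x) := by
  have hst := ST_identity h0 h4
  have hs := sqrt_eq_S h0 h4
  have hpos : 0 < Real.sqrt (1-4*x) := Real.sqrt_pos.mpr (by linarith)
  rw [eq_div_iff (ne_of_gt hpos), hs]
  linear_combination -hst


/-- The long-term apparent hashrate of the Lead Stubborn miner:
`E[Z]/E[L] = q(p + pq - q²)/(p + pq - q) - (pq(p-q)(1-γ)/γ)(1 - p(1-γ)Ĉ((1-γ)pq))/(p + pq - q)`,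
where `E[Z] = ∑_{n ≥ 1} (pq)^n C_(n-1) (n + q - (p(1-γ)/γ)(1 - (1-γ)^n))` (the sum over
`n ≥ 1` being written with the index shift `n ↦ n + 1`) and `E[L] = (p - q + pq)/(p - q)`. -/
theorem lsm_apparent_hashrate (q p γ : ℝ) (hq0 : 0 < q) (hq : q < 1 / 2)
    (hp : p = 1 - q) (hγ0 : 0 < γ) (hγ1 : γ ≤ 1) :
    (∑' n : ℕ, (p * q) ^ (n + 1) * catalanC n *
        (((n : ℝ) + 1) + q - (p * (1 - γ) / γ) * (1 - (1 - γ) ^ (n + 1)))) /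
      ((p - q + p * q) / (p - q)) =
      q * (p + p * q - q ^ 2) / (p + p * q - q) -
        (p * q * (p - q) * (1 - γ) / γ) *
          (1 - p * (1 - γ) * catalanGF ((1 - γ) * p * q)) / (p + p * q - q) := by
  have hp0 : 0 < p := by rw [hp]; linarith
  have hpq : q < p := by rw [hp]; linarith
  have hγ : 0 ≤ 1 - γ := by linarith
  set x := p * q with hx
  set y := (1 - γ) * p * q with hyd
  set c := p * (1 - γ) / γ with hc
  have hy' : y = (1 - γ) * x := by rw [hyd, hx]; ring
  have hx0 : 0 ≤ x := by rw [hx]; positivity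
  have hx4 : x < 1/4 := by rw [hx, hp]; nlinarith [sq_nonneg (1 - 2*q)]
  have hy0 : 0 ≤ y := by rw [hy']; positivity
  have hy4 : y < 1/4 := by
    have : y ≤ x := by rw [hy']; nlinarith
    linarith
  set Sx := ∑' n : ℕ, (catalan n : ℝ) * x ^ (n+1) with hSx
  set Sy := ∑' n : ℕ, (catalan n : ℝ) * y ^ (n+1) with hSy
  set Tx := ∑' n : ℕ, ((n:ℝ)+1) * (catalan n : ℝ) * x ^ (n+1) with hTx
  have hsum : (∑' n : ℕ, (p * q) ^ (n + 1) * catalanC n *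
        (((n : ℝ) + 1) + q - c * (1 - (1 - γ) ^ (n + 1))))
      = Tx + ((q - c) * Sx + c * Sy) := by
    have hterm : ∀ n : ℕ, (p * q) ^ (n + 1) * catalanC n *
          (((n : ℝ) + 1) + q - c * (1 - (1 - γ) ^ (n + 1)))
        = ((n:ℝ)+1) * (catalan n : ℝ) * x ^ (n+1)
          + ((q - c) * ((catalan n : ℝ) * x ^ (n+1)) + c * ((catalan n : ℝ) * y ^ (n+1))) := by
      intro n
      have hpow : y ^ (n+1) = (1-γ) ^ (n+1) * x ^ (n+1) := by rw [hy', mul_pow]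
      rw [catalanC_eq, hpow]
      ring
    rw [tsum_congr hterm,
      Summable.tsum_add (summable_T hx0 hx4)
        (((summable_S hx0 hx4).mul_left _).add ((summable_S hy0 hy4).mul_left _)),
      Summable.tsum_add ((summable_S hx0 hx4).mul_left _) ((summable_S hy0 hy4).mul_left _),
      tsum_mul_left, tsum_mul_left]
  have hsqx : Real.sqrt (1 - 4*x) = p - q := by
    have h : 1 - 4*x = (p - q)^2 := by rw [hx, hp]; ring
    rw [h, Real.sqrt_sq (by linarith)]
  have hSxv : Sx = q := by
    rw [hSx, S_closed hx0 hx4, hsqx, hp]; ring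
  have hTxv : Tx = x / (p - q) := by rw [hTx, T_closed hx0 hx4, hsqx]
  have hSyv : Sy = y * catalanGF y := by
    rw [hSy, S_closed hy0 hy4, catalanGF]
    by_cases hy : y = 0
    · rw [if_pos hy, hy]
      simp
    · rw [if_neg hy]
      field_simp
  rw [hsum, hSxv, hTxv, hSyv]
  have hne1 : p - q ≠ 0 := by linarith
  have hne3 : p + p * q - q ≠ 0 := by nlinarith
  have hne2 : p - q + p * q ≠ 0 := by nlinarith
  have hγne : γ ≠ 0 := ne_of_gt hγ0
  rw [hc, hx, hy']
  rw [← sub_div, div_eq_div_iff (div_ne_zero hne2 hne1) hne3]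
  field_simp
  ring
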